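/- For all walks p from v to v' in G with label in L(A) (A unambiguous, single final state), the minimum walk length equals the G×-distance from (v,q₀) to (v',q_F), and the number of shortest such walks equals the number of shortest paths from (v,q₀) to (v',q_F) in G×. -/

import Mathlib

/-- A graph database: edges with source, target, and label. -/
structure GraphDB (V E S : Type) where
  src : E → V
  tgt : E → V
  lab : E → S

/-- An NFA with transition relation `δ ⊆ Q × Σ × Q`, initial state `q0`, final states `F`. -/
structure NFAx (Q S : Type) where
  δ : Set (Q × S × Q)
  q0 : Q
  F : Set Q

/-- `A.Run q w q'`: the automaton can read word `w` going from state `q` to state `q'`. -/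
inductive NFAx.Run {Q S : Type} (A : NFAx Q S) : Q → List S → Q → Prop
  | nil (q : Q) : A.Run q [] q
  | cons {q q' q'' : Q} {a : S} {w : List S} :
      (q, a, q') ∈ A.δ → A.Run q' w q'' → A.Run q (a :: w) q''

/-- The language accepted by the NFA. -/
def NFAx.Lang {Q S : Type} (A : NFAx Q S) : Set (List S) :=
  {w | ∃ qf ∈ A.F, A.Run A.q0 w qf}

/-- `G.IsWalk v es w`: the edge list `es` forms a walk from `v` to `w` in `G`. -/
def GraphDB.IsWalk {V E S : Type} (G : GraphDB V E S) : V → List E → V → Prop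
  | v, [], w => v = w
  | v, e :: es, w => G.src e = v ∧ G.IsWalk (G.tgt e) es w

/-- Distance (minimum number of edges over all walks), `⊤` if unreachable. -/
noncomputable def GraphDB.dist {V E S : Type} (G : GraphDB V E S) (v w : V) : ℕ∞ :=
  sInf {n : ℕ∞ | ∃ es : List E, G.IsWalk v es w ∧ (es.length : ℕ∞) = n}

/-- Edges of the product graph: pairs of a `G`-edge and a compatible transition. -/
def ProdE {V E Q S : Type} (G : GraphDB V E S) (A : NFAx Q S) : Type :=
  {p : E × Q × S × Q // p.2 ∈ A.δ ∧ G.lab p.1 = p.2.2.1}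

/-- The product graph `G×` of a graph database `G` and an NFA `A`. -/
def ProdGraph {V E Q S : Type} (G : GraphDB V E S) (A : NFAx Q S) :
    GraphDB (V × Q) (ProdE G A) S where
  src p := (G.src p.1.1, p.1.2.1)
  tgt p := (G.tgt p.1.1, p.1.2.2.2)
  lab p := G.lab p.1.1

/-- Projection of a product-graph edge to the underlying `G`-edge. -/
def projE {V E Q S : Type} {G : GraphDB V E S} {A : NFAx Q S} (p : ProdE G A) : E := p.1.1

/-- `A.RunStates q w qs qf`: `qs` is the full state sequence of a run on `w` from `q` to `qf`. -/
inductive NFAx.RunStates {Q S : Type} (A : NFAx Q S) : Q → List S → List Q → Q → Prop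
  | nil (q : Q) : A.RunStates q [] [q] q
  | cons {q q' qf : Q} {a : S} {w : List S} {qs : List Q} :
      (q, a, q') ∈ A.δ → A.RunStates q' w qs qf → A.RunStates q (a :: w) (q :: qs) qf

/-- `A` is unambiguous: every accepted word has exactly one accepting run (state sequence). -/
def NFAx.Unambiguous {Q S : Type} (A : NFAx Q S) : Prop :=
  ∀ (w : List S) (qs₁ qs₂ : List Q) (q₁ q₂ : Q), q₁ ∈ A.F → q₂ ∈ A.F →
    A.RunStates A.q0 w qs₁ q₁ → A.RunStates A.q0 w qs₂ q₂ → qs₁ = qs₂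


section Aux

variable {V E Q S : Type} {G : GraphDB V E S} {A : NFAx Q S}

/-- Target state of a product edge. -/
def endSt (p : ProdE G A) : Q := p.1.2.2.2

lemma runStates_run : ∀ {q w qs q'}, A.RunStates q w qs q' → A.Run q w q' := by
  intro q w qs q' h
  induction h with
  | nil q => exact .nil q
  | cons hδ _ ih => exact .cons hδ ih

lemma run_runStates : ∀ {q w q'}, A.Run q w q' → ∃ qs, A.RunStates q w qs q' := by
  intro q w q' h
  induction h with
  | nil q => exact ⟨[q], .nil q⟩
  | cons hδ _ ih => obtain ⟨qs, hqs⟩ := ih; exact ⟨_ :: qs, .cons hδ hqs⟩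

lemma prod_walk_forward : ∀ {ps : List (ProdE G A)} {v q v' q'},
    (ProdGraph G A).IsWalk (v, q) ps (v', q') →
    G.IsWalk v (ps.map projE) v' ∧
      A.RunStates q ((ps.map projE).map G.lab) (q :: ps.map endSt) q' := by
  intro ps
  induction ps with
  | nil =>
    intro v q v' q' h
    simp only [GraphDB.IsWalk, Prod.mk.injEq] at h
    obtain ⟨rfl, rfl⟩ := h
    exact ⟨rfl, .nil q⟩
  | cons p ps ih =>
    intro v q v' q' h
    obtain ⟨hsrc, hw⟩ := h
    obtain ⟨⟨e, q1, a, q2⟩, hδ, hlab⟩ := p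
    simp only [ProdGraph, Prod.mk.injEq] at hsrc
    obtain ⟨hsrc, rfl⟩ := hsrc
    obtain ⟨hw', hr'⟩ := ih hw
    refine ⟨⟨hsrc, hw'⟩, ?_⟩
    show A.RunStates _ (G.lab e :: (ps.map projE).map G.lab) (_ :: q2 :: ps.map endSt) q'
    have hlab' : G.lab e = a := hlab
    subst hlab'
    exact .cons hδ hr'

lemma prod_walk_backward : ∀ {es : List E} {v q v' qs q'},
    G.IsWalk v es v' → A.RunStates q (es.map G.lab) qs q' →
    ∃ ps : List (ProdE G A), (ProdGraph G A).IsWalk (v, q) ps (v', q') ∧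
      ps.map projE = es ∧ q :: ps.map endSt = qs := by
  intro es
  induction es with
  | nil =>
    intro v q v' qs q' hw hr
    cases hr
    exact ⟨[], by simpa [GraphDB.IsWalk] using hw, rfl, rfl⟩
  | cons e es ih =>
    intro v q v' qs q' hw hr
    obtain ⟨hsrc, hw'⟩ := hw
    cases hr with
    | @cons _ q1 _ _ _ _ hδ hr' =>
      obtain ⟨ps, hpw, hproj, hst⟩ := ih hw' hr'
      refine ⟨⟨(e, q, G.lab e, q1), hδ, rfl⟩ :: ps, ⟨?_, ?_⟩, ?_, ?_⟩
      · simp [ProdGraph, hsrc]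
      · simpa [ProdGraph] using hpw
      · exact congrArg (List.cons e) hproj
      · show q :: q1 :: ps.map endSt = _
        rw [hst]

lemma prod_walk_inj : ∀ {ps1 ps2 : List (ProdE G A)} {v q v' v'' q' q''},
    (ProdGraph G A).IsWalk (v, q) ps1 (v', q') →
    (ProdGraph G A).IsWalk (v, q) ps2 (v'', q'') →
    ps1.map projE = ps2.map projE → ps1.map endSt = ps2.map endSt → ps1 = ps2 := by
  intro ps1
  induction ps1 with
  | nil =>
    intro ps2 v q v' v'' q' q'' _ _ hproj _
    cases ps2 with
    | nil => rfl
    | cons _ _ => simp at hproj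
  | cons p1 ps1 ih =>
    intro ps2 v q v' v'' q' q'' h1 h2 hproj hend
    cases ps2 with
    | nil => simp at hproj
    | cons p2 ps2 =>
      obtain ⟨hsrc1, hw1⟩ := h1
      obtain ⟨hsrc2, hw2⟩ := h2
      obtain ⟨⟨e1, a1, b1, c1⟩, hδ1, hlab1⟩ := p1
      obtain ⟨⟨e2, a2, b2, c2⟩, hδ2, hlab2⟩ := p2
      change e1 :: ps1.map projE = e2 :: ps2.map projE at hproj
      change c1 :: ps1.map endSt = c2 :: ps2.map endSt at hend
      simp only [List.cons.injEq] at hproj hend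
      obtain ⟨rfl, hproj⟩ := hproj
      obtain ⟨rfl, hend⟩ := hend
      simp only [ProdGraph, Prod.mk.injEq] at hsrc1 hsrc2
      obtain ⟨-, rfl⟩ := hsrc1
      obtain ⟨-, rfl⟩ := hsrc2
      have hb1 : G.lab e1 = b1 := hlab1
      have hb2 : G.lab e1 = b2 := hlab2
      obtain rfl : b1 = b2 := hb1.symm.trans hb2
      refine congrArg (List.cons _) ?_
      exact ih hw1 hw2 hproj hend

end Aux

/-- for `A` unambiguous with single final state `q_F`, the minimum length of a
walk from `v` to `v'` with label in `L(A)` equals the `G×`-distance from `(v,q₀)` to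
`(v',q_F)`, and the number of shortest such walks equals the number of shortest `G×`-paths
from `(v,q₀)` to `(v',q_F)`. -/
theorem shortest_walks_count_eq_product {V E Q S : Type} (G : GraphDB V E S) (A : NFAx Q S)
    (qF : Q) (hF : A.F = {qF}) (hU : A.Unambiguous) (v v' : V) :
    sInf {n : ℕ∞ | ∃ es : List E, G.IsWalk v es v' ∧ es.map G.lab ∈ A.Lang ∧
        (es.length : ℕ∞) = n} = (ProdGraph G A).dist (v, A.q0) (v', qF) ∧
    {es : List E | G.IsWalk v es v' ∧ es.map G.lab ∈ A.Lang ∧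
        (es.length : ℕ∞) = sInf {n : ℕ∞ | ∃ es' : List E, G.IsWalk v es' v' ∧
          es'.map G.lab ∈ A.Lang ∧ (es'.length : ℕ∞) = n}}.ncard =
      {es : List (ProdE G A) | (ProdGraph G A).IsWalk (v, A.q0) es (v', qF) ∧
        (es.length : ℕ∞) = (ProdGraph G A).dist (v, A.q0) (v', qF)}.ncard := by

  have key : ∀ {es : List E}, G.IsWalk v es v' → es.map G.lab ∈ A.Lang →
      ∃ ps : List (ProdE G A), (ProdGraph G A).IsWalk (v, A.q0) ps (v', qF) ∧
        ps.map projE = es := by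
    intro es hw hL
    obtain ⟨qf, hqf, hrun⟩ := hL
    rw [hF] at hqf
    subst hqf
    obtain ⟨qs, hqs⟩ := run_runStates hrun
    obtain ⟨ps, h1, h2, -⟩ := prod_walk_backward hw hqs
    exact ⟨ps, h1, h2⟩
  have hsets : {n : ℕ∞ | ∃ es : List E, G.IsWalk v es v' ∧ es.map G.lab ∈ A.Lang ∧
      (es.length : ℕ∞) = n} =
      {n : ℕ∞ | ∃ es : List (ProdE G A),
        (ProdGraph G A).IsWalk (v, A.q0) es (v', qF) ∧ (es.length : ℕ∞) = n} := by
    ext n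
    constructor
    · rintro ⟨es, hw, hL, hn⟩
      obtain ⟨ps, hps, hproj⟩ := key hw hL
      exact ⟨ps, hps, by rw [← hn, ← hproj, List.length_map]⟩
    · rintro ⟨ps, hps, hn⟩
      obtain ⟨hw, hr⟩ := prod_walk_forward hps
      refine ⟨ps.map projE, hw, ⟨qF, by rw [hF]; rfl, runStates_run hr⟩, ?_⟩
      rw [← hn, List.length_map]
  have h1 : sInf {n : ℕ∞ | ∃ es : List E, G.IsWalk v es v' ∧ es.map G.lab ∈ A.Lang ∧
      (es.length : ℕ∞) = n} = (ProdGraph G A).dist (v, A.q0) (v', qF) := by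
    rw [hsets]; rfl
  refine ⟨h1, ?_⟩
  set D := (ProdGraph G A).dist (v, A.q0) (v', qF) with hD
  have himg : (List.map (projE (G := G) (A := A))) ''
      {ps : List (ProdE G A) | (ProdGraph G A).IsWalk (v, A.q0) ps (v', qF) ∧
        (ps.length : ℕ∞) = D} =
      {es : List E | G.IsWalk v es v' ∧ es.map G.lab ∈ A.Lang ∧
        (es.length : ℕ∞) = sInf {n : ℕ∞ | ∃ es' : List E, G.IsWalk v es' v' ∧
          es'.map G.lab ∈ A.Lang ∧ (es'.length : ℕ∞) = n}} := by
    ext es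
    constructor
    · rintro ⟨ps, ⟨hps, hlen⟩, rfl⟩
      obtain ⟨hw, hr⟩ := prod_walk_forward hps
      exact ⟨hw, ⟨qF, by rw [hF]; rfl, runStates_run hr⟩,
        by rw [List.length_map, hlen, h1]⟩
    · rintro ⟨hw, hL, hlen⟩
      obtain ⟨ps, hps, hproj⟩ := key hw hL
      refine ⟨ps, ⟨hps, ?_⟩, hproj⟩
      rw [← hproj, List.length_map] at hlen
      rw [hlen, h1]
  have hinj : Set.InjOn (List.map (projE (G := G) (A := A)))
      {ps : List (ProdE G A) | (ProdGraph G A).IsWalk (v, A.q0) ps (v', qF) ∧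
        (ps.length : ℕ∞) = D} := by
    rintro ps1 ⟨hps1, -⟩ ps2 ⟨hps2, -⟩ hproj
    obtain ⟨-, hr1⟩ := prod_walk_forward hps1
    obtain ⟨-, hr2⟩ := prod_walk_forward hps2
    rw [hproj] at hr1
    have hqF : qF ∈ A.F := by rw [hF]; rfl
    have := hU _ _ _ _ _ hqF hqF hr1 hr2
    simp only [List.cons.injEq, true_and] at this
    exact prod_walk_inj hps1 hps2 hproj this
  rw [← himg, Set.ncard_image_of_injOn hinj]
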